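/- Let G be a finite graph with simple random walk transition matrix M, let o be a fixed vertex, and let B be a random real matrix indexed by the vertices of G with |B_{u,v}| \le c_1 M_{u,v} almost surely. Define Y_j(G,v,w) = \sum_{j_1+j_2+2=j,\, j_1,j_2 \ge 0} (B M^{j_1})_{v,w} (B M^{j_2})_{w,v} and \alpha_{ij} = E[ \sum_{v \ne o} Y_i(G,o,v) Y_j(G,o,v) ]. Then for any power series f(z) = \sum_i a_i z^i and g(z) = \sum_j b_j z^j with radius of convergence greater than 1, the double series H_G(f,g) = (1/2) \sum_{i,j \ge 1} i j \, \alpha_{ij} \, a_i b_j converges absolutely and satisfies |H_G(f,g)| \le c_1^4 \|f\|_* \|g\|_*, where \|f\|_* = \sum_{k\ge 1} k^2 |a_k|. -/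

import Mathlib

open Matrix Finset MeasureTheory

lemma sq_summable_of_geom {r : ℝ} (hr : 1 < r) {c : ℕ → ℝ} (hc : ∀ k : ℕ, 0 ≤ c k)
    (h : Summable fun k => c k * r ^ k) : Summable fun k : ℕ => (k : ℝ) ^ 2 * c k := by
  have hr0 : (0:ℝ) < r := lt_trans one_pos hr
  have h1 : Summable fun n : ℕ => (n : ℝ) ^ 2 * (1 / r) ^ n := by
    apply summable_pow_mul_geometric_of_norm_lt_one
    rw [norm_div, norm_one, Real.norm_eq_abs, abs_of_pos hr0]
    rw [div_lt_one hr0]; exact hr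
  have hb : BddAbove (Set.range fun n : ℕ => (n : ℝ) ^ 2 * (1 / r) ^ n) :=
    h1.tendsto_atTop_zero.bddAbove_range
  obtain ⟨C, hC⟩ := hb
  refine Summable.of_nonneg_of_le (fun k => mul_nonneg (by positivity) (hc k)) (fun k => ?_) (h.mul_left C)
  have hrk : ((1:ℝ)/r) ^ k * r ^ k = 1 := by
    rw [div_pow, one_pow, div_mul_cancel₀]
    exact (pow_pos hr0 k).ne'
  have heq : (k:ℝ)^2 * c k = ((k:ℝ)^2 * (1/r)^k) * (c k * r ^ k) := by
    linear_combination (-(k:ℝ)^2 * c k) * hrk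
  rw [heq]
  have hCk : (k:ℝ)^2 * (1/r)^k ≤ C := hC ⟨k, rfl⟩
  have : 0 ≤ c k * r ^ k := mul_nonneg (hc k) (by positivity)
  exact mul_le_mul_of_nonneg_right hCk this

set_option maxHeartbeats 1000000 in
/-- For a finite graph `G` with walk matrix `M`, a fixed vertex `o`, and a
random matrix `B` with `|B_{u,v}| ≤ c₁ M_{u,v}` a.s., the bilinear form
`H_G(f,g) = (1/2) ∑_{i,j} i j α_{ij} a_i b_j` converges absolutely and
`|H_G(f,g)| ≤ c₁⁴ ‖f‖_* ‖g‖_*` for power series of radius of convergence `> 1`. -/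
theorem H_G_abs_convergent_and_bounded {V : Type*} [Fintype V] [DecidableEq V]
    (G : SimpleGraph V) [DecidableRel G.Adj] (o : V)
    (M : Matrix V V ℝ)
    (hM : ∀ u v : V, M u v = if G.Adj u v then (1 : ℝ) / (G.degree u) else 0)
    {Ω : Type*} [MeasurableSpace Ω] (μ : Measure Ω) [IsProbabilityMeasure μ]
    (B : Ω → Matrix V V ℝ) (hBmeas : ∀ u v, Measurable fun ω => B ω u v)
    (c₁ : ℝ) (hc₁ : 0 < c₁)
    (hBbound : ∀ᵐ ω ∂μ, ∀ u v, |B ω u v| ≤ c₁ * M u v)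
    (Y : ℕ → V → V → Ω → ℝ)
    (hY : ∀ j v w ω, Y j v w ω =
      ∑ p ∈ (Finset.range j ×ˢ Finset.range j).filter (fun p => p.1 + p.2 + 2 = j),
        (B ω * M ^ p.1) v w * (B ω * M ^ p.2) w v)
    (α : ℕ → ℕ → ℝ)
    (hα : ∀ i j, α i j = ∫ ω, ∑ v ∈ Finset.univ.erase o, Y i o v ω * Y j o v ω ∂μ)
    (a b : ℕ → ℂ)
    (hf : ∃ r : ℝ, 1 < r ∧ Summable fun k => ‖(a k)‖ * r ^ k)
    (hg : ∃ r : ℝ, 1 < r ∧ Summable fun k => ‖(b k)‖ * r ^ k) :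
    Summable (fun p : ℕ × ℕ =>
      ‖((p.1 : ℂ) * (p.2 : ℂ) * (α p.1 p.2 : ℂ) * a p.1 * b p.2)‖) ∧
    ‖((1 / 2 : ℂ) *
        ∑' p : ℕ × ℕ, (p.1 : ℂ) * (p.2 : ℂ) * (α p.1 p.2 : ℂ) * a p.1 * b p.2)‖ ≤
      c₁ ^ 4 * (∑' k : ℕ, (k : ℝ) ^ 2 * ‖(a k)‖) *
        (∑' k : ℕ, (k : ℝ) ^ 2 * ‖(b k)‖) := by
  classical
  obtain ⟨r, hr, hfa⟩ := hf
  obtain ⟨s, hs, hgb⟩ := hg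
  have hsa : Summable fun k : ℕ => (k : ℝ) ^ 2 * ‖(a k)‖ :=
    sq_summable_of_geom hr (fun k => (norm_nonneg _)) hfa
  have hsb : Summable fun k : ℕ => (k : ℝ) ^ 2 * ‖(b k)‖ :=
    sq_summable_of_geom hs (fun k => (norm_nonneg _)) hgb
  -- Matrix facts
  have hMnn : ∀ u v, 0 ≤ M u v := by
    intro u v; rw [hM]; split
    · positivity
    · exact le_refl 0
  have hMrow : ∀ u, ∑ v, M u v ≤ 1 := by
    intro u
    have hdeg : (Finset.univ.filter (G.Adj u)) = G.neighborFinset u := by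
      ext v; simp [SimpleGraph.mem_neighborFinset]
    have : ∑ v, M u v = (G.degree u : ℝ) * ((1:ℝ) / (G.degree u)) := by
      rw [Finset.sum_congr rfl fun v _ => hM u v, Finset.sum_ite, Finset.sum_const,
        Finset.sum_const_zero, add_zero, nsmul_eq_mul, hdeg,
        SimpleGraph.card_neighborFinset_eq_degree]
    rw [this]
    rcases Nat.eq_zero_or_pos (G.degree u) with h0 | hpos
    · simp [h0]
    · rw [mul_one_div, div_self (by positivity)]
  have hpow : ∀ k : ℕ, (∀ u v, 0 ≤ (M ^ k) u v) ∧ (∀ u, ∑ v, (M ^ k) u v ≤ 1) := by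
    intro k
    induction k with
    | zero =>
      constructor
      · intro u v; simp [Matrix.one_apply]; positivity
      · intro u; simp [Matrix.one_apply]
    | succ n ih =>
      constructor
      · intro u v
        rw [pow_succ, Matrix.mul_apply]
        exact Finset.sum_nonneg fun x _ => mul_nonneg (ih.1 u x) (hMnn x v)
      · intro u
        calc ∑ v, (M ^ (n+1)) u v = ∑ v, ∑ x, (M ^ n) u x * M x v := by
              simp [pow_succ, Matrix.mul_apply]
          _ = ∑ x, (M ^ n) u x * ∑ v, M x v := by
              rw [Finset.sum_comm]; simp [Finset.mul_sum]
          _ ≤ ∑ x, (M ^ n) u x * 1 :=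
              Finset.sum_le_sum fun x _ => mul_le_mul_of_nonneg_left (hMrow x) (ih.1 u x)
          _ ≤ 1 := by simpa using ih.2 u
  have hpow_nn : ∀ (k : ℕ) u v, 0 ≤ (M ^ k) u v := fun k => (hpow k).1
  have hpow_le : ∀ (k : ℕ) u v, (M ^ k) u v ≤ 1 := by
    intro k u v
    calc (M ^ k) u v ≤ ∑ w, (M ^ k) u w :=
          Finset.single_le_sum (fun w _ => hpow_nn k u w) (Finset.mem_univ v)
      _ ≤ 1 := (hpow k).2 u
  -- cardinality of the composition set
  have hcard : ∀ n : ℕ,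
      (((Finset.range n ×ˢ Finset.range n).filter fun p => p.1 + p.2 + 2 = n).card : ℝ) ≤ n := by
    intro n
    have : (((Finset.range n ×ˢ Finset.range n).filter fun p => p.1 + p.2 + 2 = n).card) ≤
        (Finset.range n).card := by
      apply Finset.card_le_card_of_injOn Prod.fst
      · intro p hp
        exact Finset.mem_product.mp (Finset.mem_filter.mp hp).1 |>.1
      · intro p hp q hq h
        have h1 := (Finset.mem_filter.mp hp).2
        have h2 := (Finset.mem_filter.mp hq).2
        exact Prod.ext h (by omega)
    calc (((Finset.range n ×ˢ Finset.range n).filter fun p => p.1 + p.2 + 2 = n).card : ℝ)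
        ≤ ((Finset.range n).card : ℝ) := by exact_mod_cast this
      _ = n := by simp
  -- pointwise bound on the integrand
  have hkey : ∀ (i j : ℕ) (ω : Ω), (∀ u v, |B ω u v| ≤ c₁ * M u v) →
      |∑ v ∈ Finset.univ.erase o, Y i o v ω * Y j o v ω| ≤ c₁ ^ 4 * i * j := by
    intro i j ω hB
    have hBM : ∀ (k : ℕ) (v w : V), |(B ω * M ^ k) v w| ≤ c₁ * (M ^ (k+1)) v w := by
      intro k v w
      rw [Matrix.mul_apply]
      refine (Finset.abs_sum_le_sum_abs _ _).trans ?_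
      have : ∀ x ∈ Finset.univ, |B ω v x * (M ^ k) x w| ≤ c₁ * (M v x * (M ^ k) x w) := by
        intro x _
        rw [abs_mul, abs_of_nonneg (hpow_nn k x w), ← mul_assoc]
        exact mul_le_mul_of_nonneg_right (hB v x) (hpow_nn k x w)
      refine (Finset.sum_le_sum this).trans ?_
      rw [← Finset.mul_sum, pow_succ', Matrix.mul_apply]
    set Fi := (Finset.range i ×ˢ Finset.range i).filter (fun p => p.1 + p.2 + 2 = i) with hFi
    set Fj := (Finset.range j ×ˢ Finset.range j).filter (fun p => p.1 + p.2 + 2 = j) with hFj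
    set T : Finset (ℕ × ℕ) → V → ℝ :=
      fun F v => ∑ p ∈ F, (c₁ * (M ^ (p.1+1)) o v) * (c₁ * (M ^ (p.2+1)) v o) with hT
    have hTnn : ∀ F v, 0 ≤ T F v := by
      intro F v
      exact Finset.sum_nonneg fun p _ => mul_nonneg
        (mul_nonneg hc₁.le (hpow_nn _ o v)) (mul_nonneg hc₁.le (hpow_nn _ v o))
    have hYle : ∀ (m : ℕ) (F : Finset (ℕ × ℕ)) (v : V),
        F = (Finset.range m ×ˢ Finset.range m).filter (fun p => p.1 + p.2 + 2 = m) →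
        |Y m o v ω| ≤ T F v := by
      intro m F v hF
      rw [hY, hT, hF]
      refine (Finset.abs_sum_le_sum_abs _ _).trans (Finset.sum_le_sum ?_)
      intro p _
      rw [abs_mul]
      exact mul_le_mul (hBM p.1 o v) (hBM p.2 v o) (abs_nonneg _)
        (mul_nonneg hc₁.le (hpow_nn _ o v))
    calc |∑ v ∈ Finset.univ.erase o, Y i o v ω * Y j o v ω|
        ≤ ∑ v ∈ Finset.univ.erase o, |Y i o v ω * Y j o v ω| :=
          Finset.abs_sum_le_sum_abs _ _
      _ ≤ ∑ v ∈ Finset.univ.erase o, T Fi v * T Fj v := by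
          refine Finset.sum_le_sum fun v _ => ?_
          rw [abs_mul]
          exact mul_le_mul (hYle i Fi v hFi) (hYle j Fj v hFj) (abs_nonneg _) (hTnn Fi v)
      _ ≤ ∑ v, T Fi v * T Fj v :=
          Finset.sum_le_sum_of_subset_of_nonneg (Finset.erase_subset _ _)
            (fun v _ _ => mul_nonneg (hTnn Fi v) (hTnn Fj v))
      _ = ∑ p ∈ Fi, ∑ q ∈ Fj, ∑ v,
            ((c₁ * (M ^ (p.1+1)) o v) * (c₁ * (M ^ (p.2+1)) v o)) *
            ((c₁ * (M ^ (q.1+1)) o v) * (c₁ * (M ^ (q.2+1)) v o)) := by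
          rw [hT]
          simp_rw [Finset.sum_mul_sum]
          rw [Finset.sum_comm]
          congr 1; ext p
          rw [Finset.sum_comm]
      _ ≤ ∑ p ∈ Fi, ∑ q ∈ Fj, c₁ ^ 4 := by
          refine Finset.sum_le_sum fun p _ => Finset.sum_le_sum fun q _ => ?_
          calc ∑ v, ((c₁ * (M ^ (p.1+1)) o v) * (c₁ * (M ^ (p.2+1)) v o)) *
                ((c₁ * (M ^ (q.1+1)) o v) * (c₁ * (M ^ (q.2+1)) v o))
              ≤ ∑ v, c₁ ^ 4 * (M ^ (p.1+1)) o v := by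
                refine Finset.sum_le_sum fun v _ => ?_
                have h1 := hpow_nn (p.1+1) o v; have h2 := hpow_nn (p.2+1) v o
                have h3 := hpow_nn (q.1+1) o v; have h4 := hpow_nn (q.2+1) v o
                have l2 := hpow_le (p.2+1) v o; have l3 := hpow_le (q.1+1) o v
                have l4 := hpow_le (q.2+1) v o
                have hbcd : (M ^ (p.2+1)) v o * ((M ^ (q.1+1)) o v * (M ^ (q.2+1)) v o) ≤ 1 :=
                  mul_le_one₀ l2 (mul_nonneg h3 h4) (mul_le_one₀ l3 h4 l4)
                have habcd : (M ^ (p.1+1)) o v * ((M ^ (p.2+1)) v o *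
                    ((M ^ (q.1+1)) o v * (M ^ (q.2+1)) v o)) ≤ (M ^ (p.1+1)) o v * 1 :=
                  mul_le_mul_of_nonneg_left hbcd h1
                nlinarith [pow_pos hc₁ 4]
            _ ≤ c₁ ^ 4 := by
                rw [← Finset.mul_sum]
                calc c₁ ^ 4 * ∑ v, (M ^ (p.1+1)) o v ≤ c₁ ^ 4 * 1 :=
                      mul_le_mul_of_nonneg_left ((hpow (p.1+1)).2 o) (by positivity)
                  _ = c₁ ^ 4 := mul_one _
      _ = (Fi.card : ℝ) * (Fj.card : ℝ) * c₁ ^ 4 := by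
          simp [Finset.sum_const, nsmul_eq_mul]; ring
      _ ≤ (i : ℝ) * (j : ℝ) * c₁ ^ 4 := by
          have h4 : (0:ℝ) ≤ c₁ ^ 4 := by positivity
          have hm := mul_le_mul (hcard i) (hcard j) (Nat.cast_nonneg _) (Nat.cast_nonneg _)
          exact mul_le_mul_of_nonneg_right hm h4
      _ = c₁ ^ 4 * i * j := by ring
  -- bound on α
  have hα_bound : ∀ i j : ℕ, |α i j| ≤ c₁ ^ 4 * i * j := by
    intro i j
    rw [hα]
    have h1 : ‖∫ ω, ∑ v ∈ Finset.univ.erase o, Y i o v ω * Y j o v ω ∂μ‖ ≤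
        ∫ _, c₁ ^ 4 * i * j ∂μ := by
      apply norm_integral_le_of_norm_le (integrable_const _)
      filter_upwards [hBbound] with ω hω
      rw [Real.norm_eq_abs]
      exact hkey i j ω hω
    rw [integral_const] at h1
    simpa using h1
  -- final assembly
  set A : ℕ → ℝ := fun k => (k : ℝ) ^ 2 * ‖(a k)‖ with hA
  set Bb : ℕ → ℝ := fun k => (k : ℝ) ^ 2 * ‖(b k)‖ with hBb
  have hAnn : ∀ k, 0 ≤ A k := fun k => mul_nonneg (by positivity) (norm_nonneg _)
  have hBnn : ∀ k, 0 ≤ Bb k := fun k => mul_nonneg (by positivity) (norm_nonneg _)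
  have hterm : ∀ p : ℕ × ℕ,
      ‖((p.1 : ℂ) * (p.2 : ℂ) * (α p.1 p.2 : ℂ) * a p.1 * b p.2)‖ ≤
        (c₁ ^ 2 * A p.1) * (c₁ ^ 2 * Bb p.2) := by
    intro p
    simp only [norm_mul, Complex.norm_natCast, Complex.norm_real, Real.norm_eq_abs]
    have h1 := hα_bound p.1 p.2
    have h2 : (0:ℝ) ≤ ‖(a p.1)‖ := norm_nonneg _
    have h3 : (0:ℝ) ≤ ‖(b p.2)‖ := norm_nonneg _
    calc (p.1:ℝ) * (p.2:ℝ) * |α p.1 p.2| * ‖(a p.1)‖ * ‖(b p.2)‖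
        ≤ (p.1:ℝ) * (p.2:ℝ) * (c₁ ^ 4 * p.1 * p.2) * ‖(a p.1)‖ *
            ‖(b p.2)‖ := by
          gcongr
          all_goals first | exact h1 | positivity
      _ = (c₁ ^ 2 * A p.1) * (c₁ ^ 2 * Bb p.2) := by rw [hA, hBb]; ring
  have hprodsum : Summable (fun p : ℕ × ℕ => (c₁ ^ 2 * A p.1) * (c₁ ^ 2 * Bb p.2)) := by
    apply Summable.mul_of_nonneg (hsa.mul_left _) (hsb.mul_left _)
    · intro k; exact mul_nonneg (by positivity) (hAnn k)
    · intro k; exact mul_nonneg (by positivity) (hBnn k)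
  have hsummable : Summable (fun p : ℕ × ℕ =>
      ‖((p.1 : ℂ) * (p.2 : ℂ) * (α p.1 p.2 : ℂ) * a p.1 * b p.2)‖) :=
    Summable.of_nonneg_of_le (fun p => norm_nonneg _) hterm hprodsum
  refine ⟨hsummable, ?_⟩
  have hTsum : ‖(∑' p : ℕ × ℕ,
      (p.1 : ℂ) * (p.2 : ℂ) * (α p.1 p.2 : ℂ) * a p.1 * b p.2)‖ ≤
      ∑' p : ℕ × ℕ, (c₁ ^ 2 * A p.1) * (c₁ ^ 2 * Bb p.2) := by
    calc ‖(∑' p : ℕ × ℕ,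
          (p.1 : ℂ) * (p.2 : ℂ) * (α p.1 p.2 : ℂ) * a p.1 * b p.2)‖
        ≤ ∑' p : ℕ × ℕ, ‖((p.1 : ℂ) * (p.2 : ℂ) * (α p.1 p.2 : ℂ) * a p.1 * b p.2)‖ := by
          exact norm_tsum_le_tsum_norm hsummable
      _ ≤ ∑' p : ℕ × ℕ, (c₁ ^ 2 * A p.1) * (c₁ ^ 2 * Bb p.2) :=
          Summable.tsum_le_tsum hterm hsummable hprodsum
  have hfact : ∑' p : ℕ × ℕ, (c₁ ^ 2 * A p.1) * (c₁ ^ 2 * Bb p.2) =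
      c₁ ^ 4 * (∑' k, A k) * (∑' k, Bb k) := by
    rw [Summable.tsum_prod' hprodsum (fun i => (hsb.mul_left (c₁ ^ 2)).mul_left (c₁ ^ 2 * A i))]
    have h1 : ∀ i : ℕ, ∑' j : ℕ, (c₁ ^ 2 * A i) * (c₁ ^ 2 * Bb j) =
        (c₁ ^ 2 * A i) * (c₁ ^ 2 * ∑' k, Bb k) := by
      intro i; rw [tsum_mul_left, tsum_mul_left]
    rw [tsum_congr h1, tsum_mul_right, tsum_mul_left]
    ring
  rw [norm_mul]
  have h12 : ‖(1/2 : ℂ)‖ = 1/2 := by norm_num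
  rw [h12]
  have hAnn' : 0 ≤ ∑' k, A k := tsum_nonneg hAnn
  have hBnn' : 0 ≤ ∑' k, Bb k := tsum_nonneg hBnn
  calc (1/2 : ℝ) * ‖(∑' p : ℕ × ℕ,
        (p.1 : ℂ) * (p.2 : ℂ) * (α p.1 p.2 : ℂ) * a p.1 * b p.2)‖
      ≤ (1/2 : ℝ) * (c₁ ^ 4 * (∑' k, A k) * (∑' k, Bb k)) := by
        rw [← hfact]
        exact mul_le_mul_of_nonneg_left hTsum (by norm_num)
    _ ≤ c₁ ^ 4 * (∑' k, A k) * (∑' k, Bb k) := by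
        nlinarith [mul_nonneg (mul_nonneg (pow_pos hc₁ 4).le hAnn') hBnn']
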